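/- Let p ∈ ℝ^s be a probability vector (entries nonnegative, summing to 1). Then the spectral norm (largest absolute eigenvalue) of the matrix diag(p) − p pᵀ is at most 1/2. -/
import Mathlib


/-- Spectral norm (operator 2-norm) of a real matrix. -/
noncomputable def specNorm {m n : Type*} [Fintype m] [Fintype n] [DecidableEq n]
    (A : Matrix m n ℝ) : ℝ :=
  ‖LinearMap.toContinuousLinearMap (Matrix.toEuclideanLin A)‖

theorem stmt_0 (s : ℕ) (p : Fin s → ℝ) (hp : ∀ i, 0 ≤ p i) (hsum : ∑ i, p i = 1) :
    specNorm (Matrix.diagonal p - Matrix.vecMulVec p p) ≤ 1 / 2 := by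
  classical
  set M : Matrix (Fin s) (Fin s) ℝ := Matrix.diagonal p - Matrix.vecMulVec p p with hM
  have hple : ∀ i, p i ≤ 1 := by
    intro i
    calc p i ≤ ∑ j, p j := Finset.single_le_sum (fun j _ => hp j) (Finset.mem_univ i)
    _ = 1 := hsum
  have habs : ∀ i j, |M i j| = p i * p j + (if i = j then p i - 2 * p i ^ 2 else 0) := by
    intro i j
    by_cases h : i = j
    · subst h
      simp only [hM, Matrix.sub_apply, Matrix.diagonal_apply_eq, Matrix.vecMulVec_apply, if_pos rfl]
      rw [abs_of_nonneg (by nlinarith [hp i, hple i])]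
      norm_num
      ring
    · simp only [hM, Matrix.sub_apply, Matrix.diagonal_apply_ne _ h, Matrix.vecMulVec_apply,
        if_neg h]
      rw [zero_sub, abs_neg, abs_of_nonneg (mul_nonneg (hp i) (hp j))]
      ring
  have hrow : ∀ i, ∑ j, |M i j| ≤ 1 / 2 := by
    intro i
    have : ∑ j, |M i j| = 2 * p i * (1 - p i) := by
      simp only [habs]
      rw [Finset.sum_add_distrib, ← Finset.mul_sum, hsum, Finset.sum_ite_eq Finset.univ i
        (fun _ => p i - 2 * p i ^ 2), if_pos (Finset.mem_univ i)]
      ring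
    rw [this]
    nlinarith [sq_nonneg (p i - 1 / 2)]
  have hsymm : ∀ i j, M i j = M j i := by
    intro i j
    simp only [hM, Matrix.sub_apply, Matrix.vecMulVec_apply, Matrix.diagonal_apply]
    rcases eq_or_ne i j with h | h
    · subst h; ring
    · rw [if_neg h, if_neg (Ne.symm h)]; ring
  have key : ∀ x : Fin s → ℝ, ∑ i, (M.mulVec x i) ^ 2 ≤ (1 / 2) ^ 2 * ∑ i, x i ^ 2 := by
    intro x
    have step1 : ∀ i, (M.mulVec x i) ^ 2 ≤ (∑ j, |M i j|) * ∑ j, |M i j| * x j ^ 2 := by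
      intro i
      have : M.mulVec x i = ∑ j, M i j * x j := by
        simp [Matrix.mulVec, dotProduct]
      rw [this]
      refine Finset.sum_sq_le_sum_mul_sum_of_sq_eq_mul _ (fun j _ => abs_nonneg _)
        (fun j _ => mul_nonneg (abs_nonneg _) (sq_nonneg _)) (fun j _ => ?_)
      rw [mul_pow, ← mul_assoc, ← sq_abs (M i j)]
      ring
    calc ∑ i, (M.mulVec x i) ^ 2 ≤ ∑ i, (1 / 2) * ∑ j, |M i j| * x j ^ 2 := by
          refine Finset.sum_le_sum fun i _ => (step1 i).trans ?_
          exact mul_le_mul_of_nonneg_right (hrow i)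
            (Finset.sum_nonneg fun j _ => mul_nonneg (abs_nonneg _) (sq_nonneg _))
      _ = (1 / 2) * ∑ j, (∑ i, |M i j|) * x j ^ 2 := by
          rw [← Finset.mul_sum, Finset.sum_comm]
          simp_rw [Finset.sum_mul]
      _ ≤ (1 / 2) * ∑ j, (1 / 2) * x j ^ 2 := by
          refine mul_le_mul_of_nonneg_left (Finset.sum_le_sum fun j _ => ?_) (by norm_num)
          refine mul_le_mul_of_nonneg_right ?_ (sq_nonneg _)
          calc ∑ i, |M i j| = ∑ i, |M j i| := by
                refine Finset.sum_congr rfl fun i _ => by rw [hsymm]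
            _ ≤ 1 / 2 := hrow j
      _ = (1 / 2) ^ 2 * ∑ i, x i ^ 2 := by rw [← Finset.mul_sum]; ring
  rw [specNorm]
  refine ContinuousLinearMap.opNorm_le_bound _ (by norm_num) fun x => ?_
  rw [LinearMap.coe_toContinuousLinearMap']
  have hx : Matrix.toEuclideanLin M x =
      (WithLp.equiv 2 (Fin s → ℝ)).symm (M.mulVec ((WithLp.equiv 2 (Fin s → ℝ)) x)) := rfl
  rw [hx]
  set y : Fin s → ℝ := (WithLp.equiv 2 (Fin s → ℝ)) x with hy
  have hnx : ‖x‖ = Real.sqrt (∑ i, y i ^ 2) := by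
    rw [EuclideanSpace.norm_eq]
    congr 1
    refine Finset.sum_congr rfl fun i _ => ?_
    rw [Real.norm_eq_abs, sq_abs]
    rfl
  have hnMx : ‖(WithLp.equiv 2 (Fin s → ℝ)).symm (M.mulVec y)‖ =
      Real.sqrt (∑ i, (M.mulVec y i) ^ 2) := by
    rw [EuclideanSpace.norm_eq]
    congr 1
    refine Finset.sum_congr rfl fun i _ => ?_
    rw [Real.norm_eq_abs, sq_abs]
    rfl
  rw [hnMx, hnx]
  have h2 : (1 : ℝ) / 2 * Real.sqrt (∑ i, y i ^ 2) =
      Real.sqrt ((1 / 2) ^ 2 * ∑ i, y i ^ 2) := by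
    rw [Real.sqrt_mul (by positivity), Real.sqrt_sq (by norm_num)]
  rw [h2]
  exact Real.sqrt_le_sqrt (key y)
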